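/- Let ϖ : Y → X be a Galois factor between irreducible SFTs with G = Gal(Y/X, ϖ), and let H ≤ G be a subgroup. Let Z = Y/H be the quotient of Y by the (free) action of H, q_H : Y → Z the projection, and β : Z → X the induced map with β ∘ q_H = ϖ. Then q_H is an unramified factor map with every fiber of cardinality |H|, q_H is a Galois factor, and Aut(Y/Z, q_H) = H. -/

import Mathlib

open Function Set

/-- The shift map on bi-infinite sequences. -/
def shiftMap (A : Type*) : (ℤ → A) → (ℤ → A) := fun x i => x (i + 1)

/-- A (two-sided) subshift over an alphabet `A`: a closed, shift-invariant subset of the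
full shift `A^ℤ` on which the shift is onto. -/
structure Subshift (A : Type*) [TopologicalSpace A] where
  carrier : Set (ℤ → A)
  isClosed' : IsClosed carrier
  shift_mem' : ∀ x ∈ carrier, shiftMap A x ∈ carrier
  shift_surjOn' : ∀ x ∈ carrier, ∃ y ∈ carrier, shiftMap A y = x

/-- The shift map restricted to a subshift. -/
def Subshift.σ {A : Type*} [TopologicalSpace A] (X : Subshift A) : X.carrier → X.carrier :=
  fun x => ⟨shiftMap A x.1, X.shift_mem' x.1 x.2⟩

/-- `X` is a shift of finite type: membership is determined by a finite-window rule. -/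
def Subshift.IsSFT {A : Type*} [TopologicalSpace A] (X : Subshift A) : Prop :=
  ∃ (n : ℕ) (W : Set (Fin n → A)),
    X.carrier = {x | ∀ i : ℤ, (fun k : Fin n => x (i + (k.val : ℤ))) ∈ W}

/-- Irreducibility (= topological transitivity) of a subshift. -/
def Subshift.Irreducible {A : Type*} [TopologicalSpace A] (X : Subshift A) : Prop :=
  ∀ U V : Set X.carrier, IsOpen U → IsOpen V → U.Nonempty → V.Nonempty →
    ∃ n : ℕ, (X.σ^[n] '' U ∩ V).Nonempty

/-- A factor map between subshifts: a continuous, shift-commuting surjection. -/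
structure IsFactorMap {A B : Type*} [TopologicalSpace A] [TopologicalSpace B]
    (Y : Subshift B) (X : Subshift A) (ϖ : Y.carrier → X.carrier) : Prop where
  continuous : Continuous ϖ
  commutes : ∀ y, ϖ (Y.σ y) = X.σ (ϖ y)
  surjective : Function.Surjective ϖ

/-- An unramified (constant-to-one) factor map of degree `d`. -/
def IsUnramified {A B : Type*} [TopologicalSpace A] [TopologicalSpace B]
    (Y : Subshift B) (X : Subshift A) (ϖ : Y.carrier → X.carrier) (d : ℕ) : Prop :=
  IsFactorMap Y X ϖ ∧ ∀ x : X.carrier, (ϖ ⁻¹' {x}).Finite ∧ (ϖ ⁻¹' {x}).ncard = d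

/-- The relative automorphism group `Aut(Y/X, ϖ)`: shift-commuting self-homeomorphisms of `Y`
over `X`. -/
def relAut {A B : Type*} [TopologicalSpace A] [TopologicalSpace B]
    (Y : Subshift B) (X : Subshift A) (ϖ : Y.carrier → X.carrier) :
    Subgroup (Equiv.Perm Y.carrier) where
  carrier := {φ | Continuous φ ∧ Continuous (φ⁻¹ : Equiv.Perm Y.carrier) ∧
    (∀ y, φ (Y.σ y) = Y.σ (φ y)) ∧ ∀ y, ϖ (φ y) = ϖ y}
  one_mem' := ⟨by simpa using continuous_id, by simpa using continuous_id,
    fun _ => by simp, fun _ => by simp⟩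
  mul_mem' := by
    rintro φ ψ ⟨hc, hci, hcomm, hrel⟩ ⟨hc', hci', hcomm', hrel'⟩
    refine ⟨?_, ?_, fun y => ?_, fun y => ?_⟩
    · simpa [Equiv.Perm.coe_mul] using hc.comp hc'
    · simpa [mul_inv_rev, Equiv.Perm.coe_mul] using hci'.comp hci
    · simp [Equiv.Perm.mul_apply, hcomm, hcomm']
    · simp [Equiv.Perm.mul_apply, hrel, hrel']
  inv_mem' := by
    rintro φ ⟨hc, hci, hcomm, hrel⟩
    refine ⟨hci, by simpa using hc, fun y => φ.injective ?_, fun y => ?_⟩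
    · simp [hcomm, fun z => (Equiv.apply_symm_apply φ z : φ (φ⁻¹ z) = z)]
    · conv_rhs => rw [← (Equiv.apply_symm_apply φ y : φ (φ⁻¹ y) = y)]
      exact (hrel _).symm

/-- A pointed Galois factor of degree `d` over a pointed subshift `(X, x₀)`. -/
def IsPointedGaloisFactor {A B : Type*} [TopologicalSpace A] [TopologicalSpace B]
    (Y : Subshift B) (y₀ : Y.carrier) (X : Subshift A) (x₀ : X.carrier)
    (ϖ : Y.carrier → X.carrier) (d : ℕ) : Prop :=
  Y.IsSFT ∧ Y.Irreducible ∧ ϖ y₀ = x₀ ∧ IsUnramified Y X ϖ d ∧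
    Nat.card (relAut Y X ϖ) = d

/-- The full shift on an alphabet `A`. -/
def fullShift (A : Type*) [TopologicalSpace A] : Subshift A where
  carrier := Set.univ
  isClosed' := isClosed_univ
  shift_mem' := fun _ _ => Set.mem_univ _
  shift_surjOn' := fun x _ => ⟨fun i => x (i - 1), Set.mem_univ _, by
    funext i; simp [shiftMap]⟩

section Infra
set_option linter.unusedSectionVars false

open Filter Topology

variable {A : Type*} [TopologicalSpace A] [DiscreteTopology A] [Finite A]

namespace Subshift

theorem continuous_shift (S : Subshift A) : Continuous S.σ := by
  apply Continuous.subtype_mk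
  exact continuous_pi fun i => (continuous_apply (i + 1)).comp continuous_subtype_val

instance (S : Subshift A) : CompactSpace S.carrier :=
  isCompact_iff_compactSpace.mp S.isClosed'.isCompact

instance (S : Subshift A) : BaireSpace S.carrier :=
  BaireSpace.of_t2Space_locallyCompactSpace

theorem shift_injective (S : Subshift A) : Function.Injective S.σ := by
  intro x y h
  apply Subtype.ext; funext i
  have h2 := congrArg (fun z : S.carrier => (z : ℤ → A) (i - 1)) h
  simpa [Subshift.σ, shiftMap] using h2

theorem shift_surjective (S : Subshift A) : Function.Surjective S.σ := by
  rintro ⟨x, hx⟩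
  obtain ⟨y, hy, hxy⟩ := S.shift_surjOn' x hx
  exact ⟨⟨y, hy⟩, Subtype.ext hxy⟩

noncomputable def shiftEquiv (S : Subshift A) : S.carrier ≃ S.carrier :=
  Equiv.ofBijective S.σ ⟨S.shift_injective, S.shift_surjective⟩

noncomputable def shiftHomeo (S : Subshift A) : S.carrier ≃ₜ S.carrier :=
  Continuous.homeoOfEquivCompactToT2 (f := S.shiftEquiv) S.continuous_shift

theorem shiftHomeo_apply (S : Subshift A) (z : S.carrier) : S.shiftHomeo z = S.σ z := rfl

noncomputable def σi (S : Subshift A) : S.carrier → S.carrier := S.shiftHomeo.symm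

theorem continuous_σi (S : Subshift A) : Continuous S.σi := S.shiftHomeo.symm.continuous

theorem σ_σi (S : Subshift A) (z : S.carrier) : S.σ (S.σi z) = z :=
  S.shiftHomeo.apply_symm_apply z

theorem σi_σ (S : Subshift A) (z : S.carrier) : S.σi (S.σ z) = z :=
  S.shiftHomeo.symm_apply_apply z

theorem σ_coord (S : Subshift A) (z : S.carrier) (i : ℤ) : (S.σ z).1 i = z.1 (i + 1) := rfl

theorem σi_coord (S : Subshift A) (z : S.carrier) (i : ℤ) : (S.σi z).1 i = z.1 (i - 1) := by
  have h := congrArg (fun w : S.carrier => w.1 (i - 1)) (S.σ_σi z)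
  rw [S.σ_coord (S.σi z) (i - 1)] at h
  simpa using h

theorem σ_iter_coord (S : Subshift A) (k : ℕ) (z : S.carrier) (i : ℤ) :
    ((S.σ)^[k] z).1 i = z.1 (i + k) := by
  induction k generalizing i with
  | zero => simp
  | succ k ih =>
    rw [Function.iterate_succ_apply', σ_coord, ih]
    congr 1; push_cast; ring

theorem σi_iter_coord (S : Subshift A) (k : ℕ) (z : S.carrier) (i : ℤ) :
    ((S.σi)^[k] z).1 i = z.1 (i - k) := by
  induction k generalizing i with
  | zero => simp
  | succ k ih =>
    rw [Function.iterate_succ_apply', σi_coord, ih]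
    congr 1; push_cast; ring

theorem σ_σi_iter (S : Subshift A) (k : ℕ) (z : S.carrier) :
    (S.σ)^[k] ((S.σi)^[k] z) = z := by
  induction k with
  | zero => rfl
  | succ k ih =>
    rw [Function.iterate_succ_apply, Function.iterate_succ_apply', σ_σi, ih]

theorem σi_σ_iter (S : Subshift A) (k : ℕ) (z : S.carrier) :
    (S.σi)^[k] ((S.σ)^[k] z) = z := by
  induction k with
  | zero => rfl
  | succ k ih =>
    rw [Function.iterate_succ_apply, Function.iterate_succ_apply', σi_σ, ih]

end Subshift

section Comm

variable {B : Type*} [TopologicalSpace B] [DiscreteTopology B] [Finite B]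
variable {S : Subshift B} {T : Subshift A}

theorem comm_iterate (f : S.carrier → T.carrier) (hc : ∀ z, f (S.σ z) = T.σ (f z)) (k : ℕ)
    (z : S.carrier) : f ((S.σ)^[k] z) = (T.σ)^[k] (f z) := by
  induction k with
  | zero => rfl
  | succ k ih =>
    rw [Function.iterate_succ_apply', Function.iterate_succ_apply', hc, ih]

theorem comm_σi (f : S.carrier → T.carrier) (hc : ∀ z, f (S.σ z) = T.σ (f z)) (z : S.carrier) :
    f (S.σi z) = T.σi (f z) := by
  apply T.shift_injective
  rw [← hc, S.σ_σi, T.σ_σi]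

theorem comm_σi_iterate (f : S.carrier → T.carrier) (hc : ∀ z, f (S.σ z) = T.σ (f z)) (k : ℕ)
    (z : S.carrier) : f ((S.σi)^[k] z) = (T.σi)^[k] (f z) := by
  induction k with
  | zero => rfl
  | succ k ih =>
    rw [Function.iterate_succ_apply', Function.iterate_succ_apply', comm_σi f hc, ih]

end Comm

end Infra
section Cyl
set_option linter.unusedSectionVars false
open Filter Topology

variable {A : Type*} [TopologicalSpace A] [DiscreteTopology A] [Finite A]

theorem abs_le_coe {i : ℤ} {j : ℕ} (h : i.natAbs ≤ j) : |i| ≤ (j:ℤ) := by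
  rw [Int.abs_eq_natAbs]; exact_mod_cast h

/-- cylinder sets -/
def cylSet (S : Subshift A) (p : S.carrier) (L : ℕ) : Set S.carrier :=
  {z : S.carrier | ∀ i : ℤ, |i| ≤ (L : ℤ) → z.1 i = p.1 i}

theorem mem_cylSet_self (S : Subshift A) (p : S.carrier) (L : ℕ) : p ∈ cylSet S p L :=
  fun _ _ => rfl

theorem isOpen_cylSet (S : Subshift A) (p : S.carrier) (L : ℕ) : IsOpen (cylSet S p L) := by
  have h : cylSet S p L = ⋂ i ∈ Set.Icc (-(L:ℤ)) (L:ℤ),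
      ((fun z : S.carrier => z.1 i) ⁻¹' {p.1 i}) := by
    ext z
    simp only [cylSet, Set.mem_setOf_eq, Set.mem_iInter, Set.mem_preimage, Set.mem_singleton_iff,
      Set.mem_Icc, abs_le]
  rw [h]
  exact (Set.finite_Icc _ _).isOpen_biInter fun i _ =>
    (isOpen_discrete {p.1 i}).preimage ((continuous_apply i).comp continuous_subtype_val)

theorem exists_cylSet_subset (S : Subshift A) {U : Set S.carrier} (hU : IsOpen U)
    {p : S.carrier} (hp : p ∈ U) : ∃ L : ℕ, cylSet S p L ⊆ U := by
  obtain ⟨V, hV, rfl⟩ := isOpen_induced_iff.mp hU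
  obtain ⟨I, u, h1, h2⟩ := isOpen_pi_iff.mp hV p.1 hp
  refine ⟨I.sup Int.natAbs, fun z hz => ?_⟩
  have hzV : z.1 ∈ V := by
    apply h2
    intro i hi
    have hb : |i| ≤ ((I.sup Int.natAbs : ℕ) : ℤ) := by
      have h3 := Finset.le_sup (f := Int.natAbs) hi
      rw [Int.abs_eq_natAbs]
      exact_mod_cast h3
    rw [hz i hb]
    exact (h1 i hi).2
  exact hzV

theorem tendsto_of_coords {S : Subshift A} {z : ℕ → S.carrier} {p : S.carrier}
    (h : ∀ i : ℤ, ∀ᶠ j in atTop, (z j).1 i = p.1 i) : Tendsto z atTop (𝓝 p) := by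
  rw [tendsto_subtype_rng, tendsto_pi_nhds]
  intro i
  have : 𝓝 (p.1 i) = pure (p.1 i) := by rw [nhds_discrete]
  rw [this]
  exact tendsto_pure.mpr (h i)

theorem coords_of_tendsto {S : Subshift A} {z : ℕ → S.carrier} {p : S.carrier}
    (h : Tendsto z atTop (𝓝 p)) : ∀ i : ℤ, ∀ᶠ j in atTop, (z j).1 i = p.1 i := by
  intro i
  have hc : Tendsto (fun j => (z j).1 i) atTop (𝓝 (p.1 i)) :=
    (((continuous_apply i).comp continuous_subtype_val).tendsto p).comp h
  have : 𝓝 (p.1 i) = pure (p.1 i) := by rw [nhds_discrete]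
  rw [this] at hc
  exact tendsto_pure.mp hc

end Cyl
section CHL
set_option linter.unusedSectionVars false
open Filter Topology

variable {A B : Type*} [TopologicalSpace A] [DiscreteTopology A] [Finite A]
  [TopologicalSpace B] [DiscreteTopology B] [Finite B]

/-- Curtis–Hedlund–Lyndon style local rule for continuous shift-commuting maps. -/
theorem exists_radius (S : Subshift B) (T : Subshift A) (f : S.carrier → T.carrier)
    (hf : Continuous f) (hc : ∀ z, f (S.σ z) = T.σ (f z)) :
    ∃ r : ℕ, ∀ (z z' : S.carrier) (i : ℤ),
      (∀ j : ℤ, i - r ≤ j → j ≤ i + r → z.1 j = z'.1 j) → (f z).1 i = (f z').1 i := by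
  set g : S.carrier → A := fun z => (f z).1 0 with hg
  have hgc : Continuous g := (continuous_apply (0:ℤ)).comp (continuous_subtype_val.comp hf)
  have hUo : ∀ p : S.carrier, IsOpen {z : S.carrier | g z = g p} := by
    intro p
    have : {z : S.carrier | g z = g p} = g ⁻¹' {g p} := rfl
    rw [this]
    exact (isOpen_discrete _).preimage hgc
  have hL : ∀ p : S.carrier, ∃ L : ℕ, cylSet S p L ⊆ {z | g z = g p} := by
    intro p
    exact exists_cylSet_subset S (hUo p) rfl
  choose L hLs using hL
  obtain ⟨t, ht⟩ := isCompact_univ.elim_finite_subcover (fun p => cylSet S p (L p))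
    (fun p => isOpen_cylSet S p (L p)) (fun z _ => Set.mem_iUnion.mpr ⟨z, mem_cylSet_self S z (L z)⟩)
  set r : ℕ := t.sup L with hr
  have claim0 : ∀ w w' : S.carrier, (∀ j : ℤ, |j| ≤ (r:ℤ) → w.1 j = w'.1 j) → g w = g w' := by
    intro w w' hww
    obtain ⟨c, hct, hwc⟩ := Set.mem_iUnion₂.mp (ht (Set.mem_univ w))
    have hLc : (L c : ℤ) ≤ (r : ℤ) := by exact_mod_cast Finset.le_sup hct
    have hw'c : w' ∈ cylSet S c (L c) := by
      intro i hi
      rw [← hww i (le_trans hi hLc)]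
      exact hwc i hi
    have e1 : g w = g c := hLs c hwc
    have e2 : g w' = g c := hLs c hw'c
    rw [e1, e2]
  refine ⟨r, ?_⟩
  intro z z' i hag
  rcases Int.eq_nat_or_neg i with ⟨n, rfl | rfl⟩
  · have key : g ((S.σ)^[n] z) = g ((S.σ)^[n] z') := by
      apply claim0
      intro j hj
      rw [S.σ_iter_coord, S.σ_iter_coord]
      apply hag <;> [skip; skip] <;> · rw [abs_le] at hj; omega
    have e : ∀ w : S.carrier, g ((S.σ)^[n] w) = (f w).1 n := by
      intro w
      rw [hg]
      simp only
      rw [comm_iterate f hc, T.σ_iter_coord, zero_add]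
    rw [e z, e z'] at key
    exact key
  · have key : g ((S.σi)^[n] z) = g ((S.σi)^[n] z') := by
      apply claim0
      intro j hj
      rw [S.σi_iter_coord, S.σi_iter_coord]
      apply hag <;> [skip; skip] <;> · rw [abs_le] at hj; omega
    have e : ∀ w : S.carrier, g ((S.σi)^[n] w) = (f w).1 (-n) := by
      intro w
      rw [hg]
      simp only
      rw [comm_σi_iterate f hc, T.σi_iter_coord, zero_sub]
    rw [e z, e z'] at key
    exact key

end CHL

section Rigid
set_option linter.unusedSectionVars false

variable {B : Type*} [TopologicalSpace B] [DiscreteTopology B] [Finite B]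

theorem fix_of_interior (Y : Subshift B) (hYirr : Y.Irreducible)
    (f : Y.carrier → Y.carrier) (hf : Continuous f) (hc2 : ∀ z, f (Y.σ z) = Y.σ (f z))
    (hne : (interior {z | f z = z}).Nonempty) : ∀ z, f z = z := by
  by_contra hcon
  push_neg at hcon
  obtain ⟨z₀, hz₀⟩ := hcon
  have hV : IsOpen {z : Y.carrier | f z ≠ z} := by
    have : {z : Y.carrier | f z ≠ z} = {z : Y.carrier | f z = z}ᶜ := rfl
    rw [this]
    exact (isClosed_eq hf continuous_id).isOpen_compl
  obtain ⟨n, w, ⟨hw1, hw2⟩⟩ := hYirr _ _ isOpen_interior hV hne ⟨z₀, hz₀⟩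
  obtain ⟨u, hu, rfl⟩ := hw1
  have hu' : u ∈ {z : Y.carrier | f z = z} := interior_subset hu
  simp only [Set.mem_setOf_eq] at hu'
  exact hw2 (by rw [comm_iterate (S := Y) (T := Y) f hc2 n u, hu'])

end Rigid
section Trans
set_option linter.unusedSectionVars false
open Filter Topology TopologicalSpace

variable {A : Type*} [TopologicalSpace A] [DiscreteTopology A] [Finite A]

/-- forward transitive point, with quantitative windows -/
def FTpt (S : Subshift A) (t : S.carrier) : Prop :=
  ∀ (p : S.carrier) (L K : ℕ), ∃ k, K ≤ k ∧ ∀ i : ℤ, |i| ≤ (L:ℤ) → ((S.σ)^[k] t).1 i = p.1 i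

/-- backward transitive point -/
def BTpt (S : Subshift A) (t : S.carrier) : Prop :=
  ∀ (p : S.carrier) (L K : ℕ), ∃ k, K ≤ k ∧ ∀ i : ℤ, |i| ≤ (L:ℤ) → ((S.σi)^[k] t).1 i = p.1 i

theorem FTpt_shift (S : Subshift A) {t : S.carrier} (h : FTpt S t) (k₀ : ℕ) :
    FTpt S ((S.σ)^[k₀] t) := by
  intro p L K
  obtain ⟨k, hk, hco⟩ := h p L (K + k₀)
  refine ⟨k - k₀, by omega, ?_⟩
  intro i hi
  rw [← Function.iterate_add_apply, (by omega : k - k₀ + k₀ = k)]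
  exact hco i hi

theorem BTpt_shift (S : Subshift A) {t : S.carrier} (h : BTpt S t) (k₀ : ℕ) :
    BTpt S ((S.σi)^[k₀] t) := by
  intro p L K
  obtain ⟨k, hk, hco⟩ := h p L (K + k₀)
  refine ⟨k - k₀, by omega, ?_⟩
  intro i hi
  rw [← Function.iterate_add_apply, (by omega : k - k₀ + k₀ = k)]
  exact hco i hi

theorem exists_FT_BT (S : Subshift A) [Nonempty S.carrier] (hirr : S.Irreducible) :
    ∃ t, FTpt S t ∧ BTpt S t := by
  obtain ⟨b, hbc, hbne, hbasis⟩ := exists_countable_basis S.carrier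
  haveI : Countable ↥b := hbc.to_subtype
  -- dense open sets
  set Of : ↥b × ℕ → Set S.carrier := fun x => ⋃ (k : ℕ) (_ : x.2 ≤ k), (S.σ)^[k] ⁻¹' x.1.1 with hOf
  set Ob : ↥b × ℕ → Set S.carrier := fun x => ⋃ (k : ℕ) (_ : x.2 ≤ k), (S.σi)^[k] ⁻¹' x.1.1 with hOb
  have hVopen : ∀ V : ↥b, IsOpen V.1 := fun V => hbasis.isOpen V.2
  have hVne : ∀ V : ↥b, V.1.Nonempty := by
    intro V
    rcases Set.eq_empty_or_nonempty V.1 with h | h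
    · exact absurd (h ▸ V.2) hbne
    · exact h
  have hOfopen : ∀ x, IsOpen (Of x) := fun x =>
    isOpen_iUnion fun k => isOpen_iUnion fun _ => (hVopen x.1).preimage (S.continuous_shift.iterate k)
  have hObopen : ∀ x, IsOpen (Ob x) := fun x =>
    isOpen_iUnion fun k => isOpen_iUnion fun _ => (hVopen x.1).preimage (S.continuous_σi.iterate k)
  have himg : ∀ (k : ℕ) (U : Set S.carrier), (S.σ)^[k] '' U = (S.σi)^[k] ⁻¹' U := by
    intro k U
    ext z
    constructor
    · rintro ⟨u, hu, rfl⟩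
      simpa [S.σi_σ_iter] using hu
    · intro hz
      exact ⟨(S.σi)^[k] z, hz, S.σ_σi_iter k z⟩
  have hOfdense : ∀ x, Dense (Of x) := by
    rintro ⟨V, K⟩
    rw [dense_iff_inter_open]
    intro U hU hUne
    have hU' : IsOpen ((S.σ)^[K] '' U) := by
      rw [himg]
      exact hU.preimage (S.continuous_σi.iterate K)
    obtain ⟨j, w, hw1, hwV⟩ := hirr _ _ hU' (hVopen V) (Set.image_nonempty.mpr hUne) (hVne V)
    obtain ⟨u', hu', rfl⟩ := hw1
    obtain ⟨u, hu, rfl⟩ := hu'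
    refine ⟨u, hu, ?_⟩
    simp only [hOf, Set.mem_iUnion, Set.mem_preimage]
    refine ⟨j + K, by omega, ?_⟩
    rw [Function.iterate_add_apply]
    exact hwV
  have hObdense : ∀ x, Dense (Ob x) := by
    rintro ⟨V, K⟩
    rw [dense_iff_inter_open]
    intro U hU hUne
    have hV' : IsOpen ((S.σ)^[K] '' V.1) := by
      rw [himg]
      exact (hVopen V).preimage (S.continuous_σi.iterate K)
    obtain ⟨j, w, hw1, hwU⟩ := hirr _ _ hV' hU (Set.image_nonempty.mpr (hVne V)) hUne
    obtain ⟨v', hv', rfl⟩ := hw1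
    obtain ⟨v, hv, rfl⟩ := hv'
    refine ⟨(S.σ)^[j] ((S.σ)^[K] v), hwU, ?_⟩
    simp only [hOb, Set.mem_iUnion, Set.mem_preimage]
    refine ⟨j + K, by omega, ?_⟩
    rw [← Function.iterate_add_apply]
    simpa [S.σi_σ_iter] using hv
  -- Baire
  set F : (↥b × ℕ) × Bool → Set S.carrier := fun x => cond x.2 (Of x.1) (Ob x.1) with hF
  have hFopen : ∀ x, IsOpen (F x) := by
    rintro ⟨x, (_ | _)⟩
    · exact hObopen x
    · exact hOfopen x
  have hFdense : ∀ x, Dense (F x) := by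
    rintro ⟨x, (_ | _)⟩
    · exact hObdense x
    · exact hOfdense x
  have hD : Dense (⋂ x, F x) := dense_iInter_of_isOpen hFopen hFdense
  obtain ⟨t, ht⟩ := hD.nonempty
  simp only [Set.mem_iInter] at ht
  have main : ∀ (dir : Bool) (p : S.carrier) (L K : ℕ), ∃ k, K ≤ k ∧
      (cond dir ((S.σ)^[k] t) ((S.σi)^[k] t)) ∈ cylSet S p L := by
    intro dir p L K
    obtain ⟨V, hVb, hpV, hVsub⟩ := hbasis.exists_subset_of_mem_open
      (mem_cylSet_self S p L) (isOpen_cylSet S p L)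
    have h := ht (⟨⟨V, hVb⟩, K⟩, dir)
    cases dir with
    | false =>
      simp only [hF, hOb, cond_false, Set.mem_iUnion] at h ⊢
      obtain ⟨k, hk, hmem⟩ := h
      exact ⟨k, hk, hVsub hmem⟩
    | true =>
      simp only [hF, hOf, cond_true, Set.mem_iUnion] at h ⊢
      obtain ⟨k, hk, hmem⟩ := h
      exact ⟨k, hk, hVsub hmem⟩
  refine ⟨t, ?_, ?_⟩
  · intro p L K
    obtain ⟨k, hk, hmem⟩ := main true p L K
    exact ⟨k, hk, hmem⟩
  · intro p L K
    obtain ⟨k, hk, hmem⟩ := main false p L K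
    exact ⟨k, hk, hmem⟩

end Trans
section Splice
set_option linter.unusedSectionVars false
open Filter Topology

variable {B : Type*} [TopologicalSpace B] [DiscreteTopology B] [Finite B]

theorem splice_left (Y : Subshift B) {n : ℕ} {W : Set (Fin n → B)}
    (hchar : Y.carrier = {x | ∀ i : ℤ, (fun k : Fin n => x (i + (k.val : ℤ))) ∈ W})
    (tt u : Y.carrier) (m : ℕ) (hm : n ≤ m)
    (hag : ∀ i : ℤ, -(m:ℤ) ≤ i → i ≤ -1 → tt.1 i = u.1 i) :
    (fun i : ℤ => if i ≤ -1 then tt.1 i else u.1 i) ∈ Y.carrier := by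
  obtain ⟨ttf, htt⟩ := tt
  obtain ⟨uf, hu⟩ := u
  simp only at hag ⊢
  rw [hchar] at htt hu ⊢
  intro i
  by_cases hcase : i + (n:ℤ) ≤ 0
  · have he : (fun k : Fin n => (fun j : ℤ => if j ≤ -1 then ttf j else uf j) (i + (k.val : ℤ)))
        = fun k : Fin n => ttf (i + (k.val : ℤ)) := by
      funext k
      have hk := k.2
      have : i + (k.val : ℤ) ≤ -1 := by omega
      simp only [this, if_pos]
    rw [he]
    exact htt i
  · have he : (fun k : Fin n => (fun j : ℤ => if j ≤ -1 then ttf j else uf j) (i + (k.val : ℤ)))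
        = fun k : Fin n => uf (i + (k.val : ℤ)) := by
      funext k
      have hk := k.2
      by_cases h2 : i + (k.val : ℤ) ≤ -1
      · simp only [h2, if_pos]
        exact hag _ (by omega) h2
      · simp only [h2, if_neg, not_false_iff]
    rw [he]
    exact hu i
  
theorem splice_right (Y : Subshift B) {n : ℕ} {W : Set (Fin n → B)}
    (hchar : Y.carrier = {x | ∀ i : ℤ, (fun k : Fin n => x (i + (k.val : ℤ))) ∈ W})
    (tt u : Y.carrier) (m : ℕ) (hm : n ≤ m)
    (hag : ∀ i : ℤ, 1 ≤ i → i ≤ (m:ℤ) → tt.1 i = u.1 i) :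
    (fun i : ℤ => if 1 ≤ i then tt.1 i else u.1 i) ∈ Y.carrier := by
  obtain ⟨ttf, htt⟩ := tt
  obtain ⟨uf, hu⟩ := u
  simp only at hag ⊢
  rw [hchar] at htt hu ⊢
  intro i
  by_cases hcase : 1 ≤ i
  · have he : (fun k : Fin n => (fun j : ℤ => if 1 ≤ j then ttf j else uf j) (i + (k.val : ℤ)))
        = fun k : Fin n => ttf (i + (k.val : ℤ)) := by
      funext k
      have : (1:ℤ) ≤ i + (k.val : ℤ) := by omega
      simp only [this, if_pos]
    rw [he]
    exact htt i
  · have he : (fun k : Fin n => (fun j : ℤ => if 1 ≤ j then ttf j else uf j) (i + (k.val : ℤ)))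
        = fun k : Fin n => uf (i + (k.val : ℤ)) := by
      funext k
      have hk := k.2
      by_cases h2 : (1:ℤ) ≤ i + (k.val : ℤ)
      · simp only [h2, if_pos]
        exact hag _ h2 (by omega)
      · simp only [h2, if_neg, not_false_iff]
    rw [he]
    exact hu i

end Splice

section Kill
set_option linter.unusedSectionVars false
open Filter Topology

variable {B : Type*} [TopologicalSpace B] [DiscreteTopology B] [Finite B]

theorem kill_left (Y : Subshift B) (ψ : Y.carrier → Y.carrier) (hcts : Continuous ψ)
    (hcm : ∀ z, ψ (Y.σ z) = Y.σ (ψ z)) (Wp W' : Y.carrier) (hψW : ψ Wp = W')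
    (hag : ∀ i : ℤ, i ≤ -1 → W'.1 i = Wp.1 i)
    (hdens : ∀ (p : Y.carrier) (L K : ℕ), ∃ k, K ≤ k ∧
      ∀ i : ℤ, |i| ≤ (L:ℤ) → ((Y.σi)^[k] Wp).1 i = p.1 i) :
    ∀ p, ψ p = p := by
  intro p
  choose k hk hco using fun j : ℕ => hdens p j j
  have h1 : Tendsto (fun j => (Y.σi)^[k j] Wp) atTop (𝓝 p) := by
    apply tendsto_of_coords
    intro i
    rw [eventually_atTop]
    exact ⟨i.natAbs, fun j hj => hco j i (abs_le_coe hj)⟩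
  have h2 : Tendsto (fun j => (Y.σi)^[k j] W') atTop (𝓝 p) := by
    apply tendsto_of_coords
    intro i
    rw [eventually_atTop]
    refine ⟨i.natAbs + 1, fun j hj => ?_⟩
    have hkj := hk j
    rw [Y.σi_iter_coord, hag _ (by omega), ← Y.σi_iter_coord]
    exact hco j i (abs_le_coe (by omega))
  have h3 : Tendsto (fun j => ψ ((Y.σi)^[k j] Wp)) atTop (𝓝 (ψ p)) := (hcts.tendsto p).comp h1
  have h4 : (fun j => ψ ((Y.σi)^[k j] Wp)) = fun j => (Y.σi)^[k j] W' := by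
    funext j
    rw [comm_σi_iterate (S := Y) (T := Y) ψ hcm, hψW]
  rw [h4] at h3
  exact tendsto_nhds_unique h3 h2

theorem kill_right (Y : Subshift B) (ψ : Y.carrier → Y.carrier) (hcts : Continuous ψ)
    (hcm : ∀ z, ψ (Y.σ z) = Y.σ (ψ z)) (Wp W' : Y.carrier) (hψW : ψ Wp = W')
    (hag : ∀ i : ℤ, 1 ≤ i → W'.1 i = Wp.1 i)
    (hdens : ∀ (p : Y.carrier) (L K : ℕ), ∃ k, K ≤ k ∧
      ∀ i : ℤ, |i| ≤ (L:ℤ) → ((Y.σ)^[k] Wp).1 i = p.1 i) :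
    ∀ p, ψ p = p := by
  intro p
  choose k hk hco using fun j : ℕ => hdens p j j
  have h1 : Tendsto (fun j => (Y.σ)^[k j] Wp) atTop (𝓝 p) := by
    apply tendsto_of_coords
    intro i
    rw [eventually_atTop]
    exact ⟨i.natAbs, fun j hj => hco j i (abs_le_coe hj)⟩
  have h2 : Tendsto (fun j => (Y.σ)^[k j] W') atTop (𝓝 p) := by
    apply tendsto_of_coords
    intro i
    rw [eventually_atTop]
    refine ⟨i.natAbs + 1, fun j hj => ?_⟩
    have hkj := hk j
    rw [Y.σ_iter_coord, hag _ (by omega), ← Y.σ_iter_coord]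
    exact hco j i (abs_le_coe (by omega))
  have h3 : Tendsto (fun j => ψ ((Y.σ)^[k j] Wp)) atTop (𝓝 (ψ p)) := (hcts.tendsto p).comp h1
  have h4 : (fun j => ψ ((Y.σ)^[k j] Wp)) = fun j => (Y.σ)^[k j] W' := by
    funext j
    rw [comm_iterate (S := Y) (T := Y) ψ hcm, hψW]
  rw [h4] at h3
  exact tendsto_nhds_unique h3 h2

end Kill
section NoAsymp
set_option linter.unusedSectionVars false
open Filter Topology

variable {A B : Type*} [TopologicalSpace A] [DiscreteTopology A] [Finite A]
  [TopologicalSpace B] [DiscreteTopology B] [Finite B]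

theorem mem_relAut_iff {Y : Subshift B} {X : Subshift A} {ϖ : Y.carrier → X.carrier}
    {φ : Equiv.Perm Y.carrier} :
    φ ∈ relAut Y X ϖ ↔ Continuous ⇑φ ∧ Continuous ⇑(φ⁻¹ : Equiv.Perm Y.carrier) ∧
      (∀ y, φ (Y.σ y) = Y.σ (φ y)) ∧ ∀ y, ϖ (φ y) = ϖ y := Iff.rfl

theorem d_pos (Y : Subshift B) (X : Subshift A) (ϖ : Y.carrier → X.carrier) (d : ℕ)
    (hϖ : IsUnramified Y X ϖ d) (y : Y.carrier) : d ≠ 0 := by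
  intro h0
  have h1 := (hϖ.2 (ϖ y)).2
  have h2 := (hϖ.2 (ϖ y)).1
  rw [h0, Set.ncard_eq_zero h2] at h1
  have : y ∈ ϖ ⁻¹' {ϖ y} := rfl
  rw [h1] at this
  exact this

/-- Main technical lemma: no two distinct points in a fiber are left-asymptotic. -/
theorem no_asymp_left (Y : Subshift B) (X : Subshift A) (ϖ : Y.carrier → X.carrier) (d : ℕ)
    (hYsft : Y.IsSFT) (hYirr : Y.Irreducible) (hϖ : IsUnramified Y X ϖ d)
    (hGal : Nat.card (relAut Y X ϖ) = d)
    (u v : Y.carrier) (himg : ϖ u = ϖ v) (hagr : ∀ i : ℤ, i ≤ -1 → u.1 i = v.1 i)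
    (hne0 : u.1 0 ≠ v.1 0) : False := by
  haveI : Nonempty Y.carrier := ⟨u⟩
  obtain ⟨n, W, hchar⟩ := hYsft
  obtain ⟨r, hr⟩ := exists_radius Y X ϖ hϖ.1.continuous hϖ.1.commutes
  set m : ℕ := n + 2 * r + 2 with hm
  obtain ⟨t, hFT, hBT⟩ := exists_FT_BT Y hYirr
  obtain ⟨k₀, _, hmatch⟩ := hBT u m 0
  set tt : Y.carrier := (Y.σi)^[k₀] t with htt
  have hBTtt : BTpt Y tt := BTpt_shift Y hBT k₀
  have hmatchu : ∀ i : ℤ, -(m:ℤ) ≤ i → i ≤ -1 → tt.1 i = u.1 i := fun i h1 h2 =>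
    hmatch i (abs_le.mpr ⟨h1, by omega⟩)
  have hmatchv : ∀ i : ℤ, -(m:ℤ) ≤ i → i ≤ -1 → tt.1 i = v.1 i := fun i h1 h2 =>
    (hmatchu i h1 h2).trans (hagr i h2)
  set Wp : Y.carrier := ⟨fun i : ℤ => if i ≤ -1 then tt.1 i else u.1 i,
    splice_left Y hchar tt u m (by omega) hmatchu⟩ with hWp
  set W'p : Y.carrier := ⟨fun i : ℤ => if i ≤ -1 then tt.1 i else v.1 i,
    splice_left Y hchar tt v m (by omega) hmatchv⟩ with hW'p
  have hWco : ∀ i : ℤ, Wp.1 i = if i ≤ -1 then tt.1 i else u.1 i := fun _ => rfl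
  have hW'co : ∀ i : ℤ, W'p.1 i = if i ≤ -1 then tt.1 i else v.1 i := fun _ => rfl
  have hWne : Wp ≠ W'p := by
    intro h
    apply hne0
    have h0 := congrArg (fun w : Y.carrier => w.1 0) h
    simp only [hWco, hW'co] at h0
    simpa using h0
  have hagW : ∀ i : ℤ, i ≤ -1 → W'p.1 i = Wp.1 i := by
    intro i hi
    rw [hWco, hW'co, if_pos hi, if_pos hi]
  have hWu : ∀ i : ℤ, -(m:ℤ) ≤ i → Wp.1 i = u.1 i := by
    intro i hi
    rw [hWco]
    by_cases h2 : i ≤ -1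
    · rw [if_pos h2]; exact hmatchu i hi h2
    · rw [if_neg h2]
  have hWv : ∀ i : ℤ, -(m:ℤ) ≤ i → W'p.1 i = v.1 i := by
    intro i hi
    rw [hW'co]
    by_cases h2 : i ≤ -1
    · rw [if_pos h2]; exact hmatchv i hi h2
    · rw [if_neg h2]
  have hϖW : ϖ Wp = ϖ W'p := by
    apply Subtype.ext
    funext i
    by_cases hi : i ≤ -(r:ℤ) - 1
    · apply hr
      intro j hj1 hj2
      rw [hagW j (by omega)]
    · have e1 : (ϖ Wp).1 i = (ϖ u).1 i := hr Wp u i fun j hj1 hj2 => hWu j (by omega)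
      have e2 : (ϖ W'p).1 i = (ϖ v).1 i := hr W'p v i fun j hj1 hj2 => hWv j (by omega)
      rw [e1, e2, himg]
  have hdens : ∀ (p : Y.carrier) (L K : ℕ), ∃ k, K ≤ k ∧
      ∀ i : ℤ, |i| ≤ (L:ℤ) → ((Y.σi)^[k] Wp).1 i = p.1 i := by
    intro p L K
    obtain ⟨k, hk, hc⟩ := hBTtt p L (max K (L + 1))
    refine ⟨k, le_trans (le_max_left _ _) hk, fun i hi => ?_⟩
    rw [Y.σi_iter_coord]
    have hile : i - k ≤ -1 := by
      rw [abs_le] at hi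
      have := le_trans (le_max_right K (L+1)) hk
      omega
    rw [hWco, if_pos hile, ← Y.σi_iter_coord]
    exact hc i hi
  -- group counting
  have hd0 : d ≠ 0 := d_pos Y X ϖ d hϖ u
  haveI hGfin : Finite (relAut Y X ϖ) := Nat.finite_of_card_ne_zero (by rw [hGal]; exact hd0)
  have hfree : ∀ χ : Equiv.Perm Y.carrier, χ ∈ relAut Y X ϖ → χ Wp = Wp → χ = 1 := by
    intro χ hχ hfix
    obtain ⟨hc1, hc2, hc3, hc4⟩ := mem_relAut_iff.mp hχ
    have hid := kill_left Y (⇑χ) hc1 hc3 Wp Wp hfix (fun i _ => rfl) hdens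
    exact Equiv.ext hid
  have hinj : Function.Injective (fun χ : relAut Y X ϖ => (χ.1 : Equiv.Perm Y.carrier) Wp) := by
    intro χ₁ χ₂ h
    simp only at h
    have hmem : (χ₂.1⁻¹ * χ₁.1) ∈ relAut Y X ϖ := mul_mem (inv_mem χ₂.2) χ₁.2
    have hfix : (χ₂.1⁻¹ * χ₁.1) Wp = Wp := by
      rw [Equiv.Perm.mul_apply, h]
      exact Equiv.symm_apply_apply _ _
    have h1 := hfree _ hmem hfix
    exact (Subtype.ext (inv_mul_eq_one.mp h1)).symm
  have horbsub : Set.range (fun χ : relAut Y X ϖ => (χ.1 : Equiv.Perm Y.carrier) Wp)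
      ⊆ ϖ ⁻¹' {ϖ Wp} := by
    rintro w ⟨χ, rfl⟩
    have h4 := (mem_relAut_iff.mp χ.2).2.2.2
    simp only [Set.mem_preimage, Set.mem_singleton_iff]
    exact h4 Wp
  have hcard : (Set.range (fun χ : relAut Y X ϖ => (χ.1 : Equiv.Perm Y.carrier) Wp)).ncard = d := by
    rw [← Nat.card_coe_set_eq, Nat.card_range_of_injective hinj, hGal]
  have heq : Set.range (fun χ : relAut Y X ϖ => (χ.1 : Equiv.Perm Y.carrier) Wp)
      = ϖ ⁻¹' {ϖ Wp} :=
    Set.eq_of_subset_of_ncard_le horbsub (by rw [hcard, (hϖ.2 _).2]) (hϖ.2 _).1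
  have hW'mem : W'p ∈ ϖ ⁻¹' {ϖ Wp} := by
    simp only [Set.mem_preimage, Set.mem_singleton_iff]
    exact hϖW.symm
  rw [← heq] at hW'mem
  obtain ⟨ψ', hψ'⟩ := hW'mem
  obtain ⟨hc1, hc2, hc3, hc4⟩ := mem_relAut_iff.mp ψ'.2
  have hid := kill_left Y (⇑ψ'.1) hc1 hc3 Wp W'p hψ' hagW hdens
  exact hWne ((hψ'.symm.trans (hid Wp)).symm)

end NoAsymp
section NoAsympR
set_option linter.unusedSectionVars false
open Filter Topology

variable {A B : Type*} [TopologicalSpace A] [DiscreteTopology A] [Finite A]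
  [TopologicalSpace B] [DiscreteTopology B] [Finite B]

/-- Mirror: no two distinct points in a fiber are right-asymptotic. -/
theorem no_asymp_right (Y : Subshift B) (X : Subshift A) (ϖ : Y.carrier → X.carrier) (d : ℕ)
    (hYsft : Y.IsSFT) (hYirr : Y.Irreducible) (hϖ : IsUnramified Y X ϖ d)
    (hGal : Nat.card (relAut Y X ϖ) = d)
    (u v : Y.carrier) (himg : ϖ u = ϖ v) (hagr : ∀ i : ℤ, 1 ≤ i → u.1 i = v.1 i)
    (hne0 : u.1 0 ≠ v.1 0) : False := by
  haveI : Nonempty Y.carrier := ⟨u⟩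
  obtain ⟨n, W, hchar⟩ := hYsft
  obtain ⟨r, hr⟩ := exists_radius Y X ϖ hϖ.1.continuous hϖ.1.commutes
  set m : ℕ := n + 2 * r + 2 with hm
  obtain ⟨t, hFT, hBT⟩ := exists_FT_BT Y hYirr
  obtain ⟨k₀, _, hmatch⟩ := hFT u m 0
  set tt : Y.carrier := (Y.σ)^[k₀] t with htt
  have hFTtt : FTpt Y tt := FTpt_shift Y hFT k₀
  have hmatchu : ∀ i : ℤ, 1 ≤ i → i ≤ (m:ℤ) → tt.1 i = u.1 i := fun i h1 h2 =>
    hmatch i (abs_le.mpr ⟨by omega, h2⟩)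
  have hmatchv : ∀ i : ℤ, 1 ≤ i → i ≤ (m:ℤ) → tt.1 i = v.1 i := fun i h1 h2 =>
    (hmatchu i h1 h2).trans (hagr i h1)
  set Wp : Y.carrier := ⟨fun i : ℤ => if 1 ≤ i then tt.1 i else u.1 i,
    splice_right Y hchar tt u m (by omega) hmatchu⟩ with hWp
  set W'p : Y.carrier := ⟨fun i : ℤ => if 1 ≤ i then tt.1 i else v.1 i,
    splice_right Y hchar tt v m (by omega) hmatchv⟩ with hW'p
  have hWco : ∀ i : ℤ, Wp.1 i = if 1 ≤ i then tt.1 i else u.1 i := fun _ => rfl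
  have hW'co : ∀ i : ℤ, W'p.1 i = if 1 ≤ i then tt.1 i else v.1 i := fun _ => rfl
  have hWne : Wp ≠ W'p := by
    intro h
    apply hne0
    have h0 := congrArg (fun w : Y.carrier => w.1 0) h
    simp only [hWco, hW'co] at h0
    simpa using h0
  have hagW : ∀ i : ℤ, 1 ≤ i → W'p.1 i = Wp.1 i := by
    intro i hi
    rw [hWco, hW'co, if_pos hi, if_pos hi]
  have hWu : ∀ i : ℤ, i ≤ (m:ℤ) → Wp.1 i = u.1 i := by
    intro i hi
    rw [hWco]
    by_cases h2 : (1:ℤ) ≤ i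
    · rw [if_pos h2]; exact hmatchu i h2 hi
    · rw [if_neg h2]
  have hWv : ∀ i : ℤ, i ≤ (m:ℤ) → W'p.1 i = v.1 i := by
    intro i hi
    rw [hW'co]
    by_cases h2 : (1:ℤ) ≤ i
    · rw [if_pos h2]; exact hmatchv i h2 hi
    · rw [if_neg h2]
  have hϖW : ϖ Wp = ϖ W'p := by
    apply Subtype.ext
    funext i
    by_cases hi : (r:ℤ) + 1 ≤ i
    · apply hr
      intro j hj1 hj2
      rw [hagW j (by omega)]
    · have e1 : (ϖ Wp).1 i = (ϖ u).1 i := hr Wp u i fun j hj1 hj2 => hWu j (by omega)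
      have e2 : (ϖ W'p).1 i = (ϖ v).1 i := hr W'p v i fun j hj1 hj2 => hWv j (by omega)
      rw [e1, e2, himg]
  have hdens : ∀ (p : Y.carrier) (L K : ℕ), ∃ k, K ≤ k ∧
      ∀ i : ℤ, |i| ≤ (L:ℤ) → ((Y.σ)^[k] Wp).1 i = p.1 i := by
    intro p L K
    obtain ⟨k, hk, hc⟩ := hFTtt p L (max K (L + 1))
    refine ⟨k, le_trans (le_max_left _ _) hk, fun i hi => ?_⟩
    rw [Y.σ_iter_coord]
    have hile : (1:ℤ) ≤ i + k := by
      rw [abs_le] at hi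
      have := le_trans (le_max_right K (L+1)) hk
      omega
    rw [hWco, if_pos hile, ← Y.σ_iter_coord]
    exact hc i hi
  have hd0 : d ≠ 0 := d_pos Y X ϖ d hϖ u
  haveI hGfin : Finite (relAut Y X ϖ) := Nat.finite_of_card_ne_zero (by rw [hGal]; exact hd0)
  have hfree : ∀ χ : Equiv.Perm Y.carrier, χ ∈ relAut Y X ϖ → χ Wp = Wp → χ = 1 := by
    intro χ hχ hfix
    obtain ⟨hc1, hc2, hc3, hc4⟩ := mem_relAut_iff.mp hχ
    have hid := kill_right Y (⇑χ) hc1 hc3 Wp Wp hfix (fun i _ => rfl) hdens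
    exact Equiv.ext hid
  have hinj : Function.Injective (fun χ : relAut Y X ϖ => (χ.1 : Equiv.Perm Y.carrier) Wp) := by
    intro χ₁ χ₂ h
    simp only at h
    have hmem : (χ₂.1⁻¹ * χ₁.1) ∈ relAut Y X ϖ := mul_mem (inv_mem χ₂.2) χ₁.2
    have hfix : (χ₂.1⁻¹ * χ₁.1) Wp = Wp := by
      rw [Equiv.Perm.mul_apply, h]
      exact Equiv.symm_apply_apply _ _
    have h1 := hfree _ hmem hfix
    exact (Subtype.ext (inv_mul_eq_one.mp h1)).symm
  have horbsub : Set.range (fun χ : relAut Y X ϖ => (χ.1 : Equiv.Perm Y.carrier) Wp)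
      ⊆ ϖ ⁻¹' {ϖ Wp} := by
    rintro w ⟨χ, rfl⟩
    have h4 := (mem_relAut_iff.mp χ.2).2.2.2
    simp only [Set.mem_preimage, Set.mem_singleton_iff]
    exact h4 Wp
  have hcard : (Set.range (fun χ : relAut Y X ϖ => (χ.1 : Equiv.Perm Y.carrier) Wp)).ncard = d := by
    rw [← Nat.card_coe_set_eq, Nat.card_range_of_injective hinj, hGal]
  have heq : Set.range (fun χ : relAut Y X ϖ => (χ.1 : Equiv.Perm Y.carrier) Wp)
      = ϖ ⁻¹' {ϖ Wp} :=
    Set.eq_of_subset_of_ncard_le horbsub (by rw [hcard, (hϖ.2 _).2]) (hϖ.2 _).1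
  have hW'mem : W'p ∈ ϖ ⁻¹' {ϖ Wp} := by
    simp only [Set.mem_preimage, Set.mem_singleton_iff]
    exact hϖW.symm
  rw [← heq] at hW'mem
  obtain ⟨ψ', hψ'⟩ := hW'mem
  obtain ⟨hc1, hc2, hc3, hc4⟩ := mem_relAut_iff.mp ψ'.2
  have hid := kill_right Y (⇑ψ'.1) hc1 hc3 Wp W'p hψ' hagW hdens
  exact hWne ((hψ'.symm.trans (hid Wp)).symm)

end NoAsympR
section Free
set_option linter.unusedSectionVars false
open Filter Topology

variable {A B : Type*} [TopologicalSpace A] [DiscreteTopology A] [Finite A]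
  [TopologicalSpace B] [DiscreteTopology B] [Finite B]

/-- The Galois group of an unramified factor acts freely. -/
theorem relAut_free (Y : Subshift B) (X : Subshift A) (ϖ : Y.carrier → X.carrier) (d : ℕ)
    (hYsft : Y.IsSFT) (hYirr : Y.Irreducible) (hϖ : IsUnramified Y X ϖ d)
    (hGal : Nat.card (relAut Y X ϖ) = d) :
    ∀ ψ : Equiv.Perm Y.carrier, ψ ∈ relAut Y X ϖ → ∀ y, ψ y = y → ψ = 1 := by
  classical
  intro ψ hψ y hfixy
  by_contra hψ1
  obtain ⟨hc1, hc2, hc3, hc4⟩ := mem_relAut_iff.mp hψ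
  have hIntEmpty : interior {z : Y.carrier | ψ z = z} = ∅ := by
    by_contra hI
    have hall := fix_of_interior Y hYirr (⇑ψ) hc1 hc3 (Set.nonempty_iff_ne_empty.mpr hI)
    exact hψ1 (Equiv.ext hall)
  have hdense : Dense {z : Y.carrier | ψ z = z}ᶜ :=
    interior_eq_empty_iff_dense_compl.mp hIntEmpty
  obtain ⟨rψ, hrψ⟩ := exists_radius Y Y (⇑ψ) hc1 hc3
  have Hpair : ∀ M : ℕ, ∃ a b : Y.carrier, a ≠ b ∧ ϖ a = ϖ b ∧
      ∀ i : ℤ, |i| ≤ (M:ℤ) → a.1 i = b.1 i := by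
    intro M
    obtain ⟨a, hamem, hane⟩ := hdense.inter_open_nonempty _ (isOpen_cylSet Y y (M + rψ))
      ⟨y, mem_cylSet_self Y y (M + rψ)⟩
    have hane' : ψ a ≠ a := hane
    refine ⟨a, ψ a, fun h => hane' h.symm, (hc4 a).symm, ?_⟩
    intro i hi
    have hay : ∀ j : ℤ, |j| ≤ ((M + rψ : ℕ):ℤ) → a.1 j = y.1 j := hamem
    have e1 : a.1 i = y.1 i := hay i (by rw [abs_le] at hi ⊢; constructor <;> [push_cast; push_cast] <;> omega)
    have e2 : (ψ a).1 i = (ψ y).1 i := by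
      apply hrψ
      intro j hj1 hj2
      apply hay
      rw [abs_le] at hi ⊢
      constructor <;> [push_cast; push_cast] <;> omega
    rw [e1, e2, hfixy]
  set HP : Prop := ∀ M : ℕ, ∃ u' v' : Y.carrier, ϖ u' = ϖ v' ∧
      (∀ i : ℤ, -(M:ℤ) ≤ i → i ≤ -1 → u'.1 i = v'.1 i) ∧ u'.1 0 ≠ v'.1 0 with hHP
  set HN : Prop := ∀ M : ℕ, ∃ u' v' : Y.carrier, ϖ u' = ϖ v' ∧
      (∀ i : ℤ, 1 ≤ i → i ≤ (M:ℤ) → u'.1 i = v'.1 i) ∧ u'.1 0 ≠ v'.1 0 with hHN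
  have hdisj : HP ∨ HN := by
    by_contra hcon
    push_neg at hcon
    obtain ⟨hnp, hnn⟩ := hcon
    rw [hHP] at hnp
    rw [hHN] at hnn
    push_neg at hnp hnn
    obtain ⟨M₀, hM₀⟩ := hnp
    obtain ⟨M₁, hM₁⟩ := hnn
    set M : ℕ := M₀ + M₁ + 1 with hM
    obtain ⟨a, b, hab, himgab, hagM⟩ := Hpair M
    have hD : ∃ i : ℤ, a.1 i ≠ b.1 i := by
      by_contra h
      push_neg at h
      exact hab (Subtype.ext (funext h))
    by_cases hpos : ∃ i : ℤ, 0 < i ∧ a.1 i ≠ b.1 i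
    · obtain ⟨lb, ⟨hlb0, hlbne⟩, hlbleast⟩ :=
        Int.exists_least_of_bdd (P := fun i => 0 < i ∧ a.1 i ≠ b.1 i)
          ⟨1, fun z hz => hz.1⟩ hpos
      have hlbM : (M:ℤ) < lb := by
        by_contra hle
        exact hlbne (hagM lb (by rw [abs_le]; omega))
      set k : ℕ := lb.toNat with hk
      have hkl : (k:ℤ) = lb := Int.toNat_of_nonneg (by omega)
      have himg' : ϖ ((Y.σ)^[k] a) = ϖ ((Y.σ)^[k] b) := by
        rw [comm_iterate ϖ hϖ.1.commutes, comm_iterate ϖ hϖ.1.commutes, himgab]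
      have hag' : ∀ i : ℤ, -(M₀:ℤ) ≤ i → i ≤ -1 → ((Y.σ)^[k] a).1 i = ((Y.σ)^[k] b).1 i := by
        intro i h1 h2
        rw [Y.σ_iter_coord, Y.σ_iter_coord]
        by_contra hne
        have hj : 0 < i + k ∧ a.1 (i + k) ≠ b.1 (i + k) := ⟨by omega, hne⟩
        have := hlbleast _ hj
        omega
      have hne' : ((Y.σ)^[k] a).1 0 ≠ ((Y.σ)^[k] b).1 0 := by
        rw [Y.σ_iter_coord, Y.σ_iter_coord, zero_add, hkl]
        exact hlbne
      exact hne' (hM₀ _ _ himg' hag')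
    · push_neg at hpos
      obtain ⟨ub, hubne, hubgr⟩ :=
        Int.exists_greatest_of_bdd (P := fun i => a.1 i ≠ b.1 i)
          ⟨0, fun z hz => by
            by_contra hzpos
            exact hz (hpos z (by omega))⟩ hD
      have hub0 : ub ≤ 0 := by
        by_contra h0
        exact hubne (hpos ub (by omega))
      have hubM : ub < -(M:ℤ) := by
        by_contra hle
        exact hubne (hagM ub (by rw [abs_le]; omega))
      set k : ℕ := (-ub).toNat with hk
      have hkl : (k:ℤ) = -ub := Int.toNat_of_nonneg (by omega)
      have himg' : ϖ ((Y.σi)^[k] a) = ϖ ((Y.σi)^[k] b) := by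
        rw [comm_σi_iterate ϖ hϖ.1.commutes, comm_σi_iterate ϖ hϖ.1.commutes, himgab]
      have hag' : ∀ i : ℤ, 1 ≤ i → i ≤ (M₁:ℤ) → ((Y.σi)^[k] a).1 i = ((Y.σi)^[k] b).1 i := by
        intro i h1 h2
        rw [Y.σi_iter_coord, Y.σi_iter_coord]
        by_contra hne
        have := hubgr _ hne
        omega
      have hne' : ((Y.σi)^[k] a).1 0 ≠ ((Y.σi)^[k] b).1 0 := by
        rw [Y.σi_iter_coord, Y.σi_iter_coord, zero_sub, hkl, neg_neg]
        exact hubne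
      exact hne' (hM₁ _ _ himg' hag')
  rcases hdisj with hKP | hKN
  · rw [hHP] at hKP
    choose uM vM himgM hagrM hneM using hKP
    obtain ⟨⟨u, v⟩, -, φ, hφmono, hφtend⟩ := isCompact_univ.tendsto_subseq
      (x := fun M => (uM M, vM M)) (fun M => Set.mem_univ _)
    have htu : Tendsto (fun j => uM (φ j)) atTop (𝓝 u) :=
      (continuous_fst.tendsto _).comp hφtend
    have htv : Tendsto (fun j => vM (φ j)) atTop (𝓝 v) :=
      (continuous_snd.tendsto _).comp hφtend
    have hcu := coords_of_tendsto htu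
    have hcv := coords_of_tendsto htv
    have himgl : ϖ u = ϖ v := by
      have t1 : Tendsto (fun j => ϖ (uM (φ j))) atTop (𝓝 (ϖ u)) :=
        (hϖ.1.continuous.tendsto u).comp htu
      have t2 : Tendsto (fun j => ϖ (uM (φ j))) atTop (𝓝 (ϖ v)) := by
        have he : (fun j => ϖ (uM (φ j))) = fun j => ϖ (vM (φ j)) :=
          funext fun j => himgM (φ j)
        rw [he]
        exact (hϖ.1.continuous.tendsto v).comp htv
      exact tendsto_nhds_unique t1 t2
    have hagl : ∀ i : ℤ, i ≤ -1 → u.1 i = v.1 i := by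
      intro i hi
      obtain ⟨j, ⟨h1, h2⟩, h3⟩ := (((hcu i).and (hcv i)).and (eventually_ge_atTop i.natAbs)).exists
      have hφj : i.natAbs ≤ φ j := le_trans h3 hφmono.le_apply
      rw [← h1, ← h2]
      exact hagrM (φ j) i (by omega) hi
    have hnel : u.1 0 ≠ v.1 0 := by
      obtain ⟨j, h1, h2⟩ := ((hcu 0).and (hcv 0)).exists
      rw [← h1, ← h2]
      exact hneM (φ j)
    exact no_asymp_left Y X ϖ d hYsft hYirr hϖ hGal u v himgl hagl hnel
  · rw [hHN] at hKN
    choose uM vM himgM hagrM hneM using hKN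
    obtain ⟨⟨u, v⟩, -, φ, hφmono, hφtend⟩ := isCompact_univ.tendsto_subseq
      (x := fun M => (uM M, vM M)) (fun M => Set.mem_univ _)
    have htu : Tendsto (fun j => uM (φ j)) atTop (𝓝 u) :=
      (continuous_fst.tendsto _).comp hφtend
    have htv : Tendsto (fun j => vM (φ j)) atTop (𝓝 v) :=
      (continuous_snd.tendsto _).comp hφtend
    have hcu := coords_of_tendsto htu
    have hcv := coords_of_tendsto htv
    have himgl : ϖ u = ϖ v := by
      have t1 : Tendsto (fun j => ϖ (uM (φ j))) atTop (𝓝 (ϖ u)) :=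
        (hϖ.1.continuous.tendsto u).comp htu
      have t2 : Tendsto (fun j => ϖ (uM (φ j))) atTop (𝓝 (ϖ v)) := by
        have he : (fun j => ϖ (uM (φ j))) = fun j => ϖ (vM (φ j)) :=
          funext fun j => himgM (φ j)
        rw [he]
        exact (hϖ.1.continuous.tendsto v).comp htv
      exact tendsto_nhds_unique t1 t2
    have hagl : ∀ i : ℤ, 1 ≤ i → u.1 i = v.1 i := by
      intro i hi
      obtain ⟨j, ⟨h1, h2⟩, h3⟩ := (((hcu i).and (hcv i)).and (eventually_ge_atTop i.natAbs)).exists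
      have hφj : i.natAbs ≤ φ j := le_trans h3 hφmono.le_apply
      rw [← h1, ← h2]
      exact hagrM (φ j) i hi (by omega)
    have hnel : u.1 0 ≠ v.1 0 := by
      obtain ⟨j, h1, h2⟩ := ((hcu 0).and (hcv 0)).exists
      rw [← h1, ← h2]
      exact hneM (φ j)
    exact no_asymp_right Y X ϖ d hYsft hYirr hϖ hGal u v himgl hagl hnel

end Free

/-- Quotients by subgroups of the Galois group: if `ϖ : Y → X` is a Galois factor with
group `G`, `H ≤ G` is a subgroup, and `q : Y → Z` is the quotient of `Y` by the free
action of `H` (i.e. the fibers of `q` are exactly the `H`-orbits), with `β : Z → X`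
the induced map with `β ∘ q = ϖ`, then `q` is an unramified factor map whose fibers
all have cardinality `|H|`, `q` is a Galois factor, and `Aut(Y/Z, q) = H`. -/
theorem stmt_9 {A B C : Type*} [TopologicalSpace A] [DiscreteTopology A] [Finite A]
    [TopologicalSpace B] [DiscreteTopology B] [Finite B]
    [TopologicalSpace C] [DiscreteTopology C] [Finite C]
    (X : Subshift A) (Y : Subshift B) (Z : Subshift C)
    (hXsft : X.IsSFT) (hXirr : X.Irreducible) (hYsft : Y.IsSFT) (hYirr : Y.Irreducible)
    (hZsft : Z.IsSFT) (hZirr : Z.Irreducible)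
    (ϖ : Y.carrier → X.carrier) (d : ℕ)
    (hϖ : IsUnramified Y X ϖ d) (hGal : Nat.card (relAut Y X ϖ) = d)
    (H : Subgroup (Equiv.Perm Y.carrier)) (hH : H ≤ relAut Y X ϖ)
    (q : Y.carrier → Z.carrier) (hq : IsFactorMap Y Z q)
    (β : Z.carrier → X.carrier) (hβ : ∀ y, β (q y) = ϖ y)
    (horb : ∀ y y' : Y.carrier, q y = q y' ↔ ∃ φ ∈ H, φ y = y') :
    IsUnramified Y Z q (Nat.card H) ∧
      Nat.card (relAut Y Z q) = Nat.card H ∧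
      relAut Y Z q = H := by
  classical
  have hfree := relAut_free Y X ϖ d hYsft hYirr hϖ hGal
  rcases isEmpty_or_nonempty Y.carrier with hY | hY
  · have hsub : Subsingleton (Equiv.Perm Y.carrier) :=
      ⟨fun a b => Equiv.ext fun z => (IsEmpty.false z).elim⟩
    have hZempty : IsEmpty Z.carrier := by
      constructor
      intro z
      obtain ⟨yy, -⟩ := hq.surjective z
      exact IsEmpty.false yy
    have hRA : relAut Y Z q = H := by
      ext φ
      have h1 : φ = 1 := Subsingleton.elim _ _
      subst h1
      simp only [one_mem]
    refine ⟨⟨hq, fun z => (IsEmpty.false z).elim⟩, by rw [hRA], hRA⟩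
  · have hd0 : d ≠ 0 := d_pos Y X ϖ d hϖ (Classical.arbitrary _)
    haveI hGfin : Finite (relAut Y X ϖ) := Nat.finite_of_card_ne_zero (by rw [hGal]; exact hd0)
    haveI hHfin : Finite H :=
      Finite.of_injective (Subgroup.inclusion hH) (Subgroup.inclusion_injective hH)
    have hfib : ∀ y : Y.carrier,
        q ⁻¹' {q y} = Set.range (fun χ : H => (χ.1 : Equiv.Perm Y.carrier) y) := by
      intro y
      ext y'
      simp only [Set.mem_preimage, Set.mem_singleton_iff, Set.mem_range]
      constructor
      · intro h
        obtain ⟨φ, hφH, hφy⟩ := (horb y y').mp h.symm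
        exact ⟨⟨φ, hφH⟩, hφy⟩
      · rintro ⟨⟨φ, hφH⟩, rfl⟩
        exact ((horb y (φ y)).mpr ⟨φ, hφH, rfl⟩).symm
    have hinjy : ∀ y : Y.carrier,
        Function.Injective (fun χ : H => (χ.1 : Equiv.Perm Y.carrier) y) := by
      intro y χ₁ χ₂ h
      simp only at h
      have hmem : (χ₂.1⁻¹ * χ₁.1) ∈ relAut Y X ϖ := hH (mul_mem (inv_mem χ₂.2) χ₁.2)
      have hfix : (χ₂.1⁻¹ * χ₁.1) y = y := by
        rw [Equiv.Perm.mul_apply, h]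
        exact Equiv.symm_apply_apply _ _
      have h1 := hfree _ hmem _ hfix
      exact (Subtype.ext (inv_mul_eq_one.mp h1)).symm
    have hunram : IsUnramified Y Z q (Nat.card H) := by
      refine ⟨hq, fun z => ?_⟩
      obtain ⟨y, rfl⟩ := hq.surjective z
      rw [hfib y]
      exact ⟨Set.finite_range _,
        by rw [← Nat.card_coe_set_eq, Nat.card_range_of_injective (hinjy y)]⟩
    have hAut : relAut Y Z q = H := by
      ext φ
      constructor
      · intro hφ
        obtain ⟨hc1, hc2, hc3, hc4⟩ := mem_relAut_iff.mp hφ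
        have hcover : ⋃ χ : H, {z : Y.carrier | φ z = (χ.1 : Equiv.Perm Y.carrier) z}
            = Set.univ := by
          ext z
          simp only [Set.mem_univ, iff_true, Set.mem_iUnion, Set.mem_setOf_eq]
          obtain ⟨χ, hχH, hχz⟩ := (horb z (φ z)).mp (hc4 z).symm
          exact ⟨⟨χ, hχH⟩, hχz.symm⟩
        have hclosed : ∀ χ : H,
            IsClosed {z : Y.carrier | φ z = (χ.1 : Equiv.Perm Y.carrier) z} :=
          fun χ => isClosed_eq hc1 (mem_relAut_iff.mp (hH χ.2)).1
        obtain ⟨χ, hχint⟩ := nonempty_interior_of_iUnion_of_closed hclosed hcover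
        set g : Equiv.Perm Y.carrier := χ.1⁻¹ * φ with hg
        have hgmemX : χ.1⁻¹ ∈ relAut Y X ϖ := inv_mem (hH χ.2)
        have hgc : Continuous ⇑g := by
          have : ⇑g = ⇑(χ.1⁻¹ : Equiv.Perm Y.carrier) ∘ ⇑φ := by
            funext z
            simp [hg, Equiv.Perm.mul_apply]
          rw [this]
          exact (mem_relAut_iff.mp hgmemX).1.comp hc1
        have hgcm : ∀ z, g (Y.σ z) = Y.σ (g z) := by
          intro z
          simp only [hg, Equiv.Perm.mul_apply]
          rw [hc3, (mem_relAut_iff.mp hgmemX).2.2.1]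
        have hseteq : {z : Y.carrier | g z = z}
            = {z : Y.carrier | φ z = (χ.1 : Equiv.Perm Y.carrier) z} := by
          ext z
          simp only [Set.mem_setOf_eq, hg, Equiv.Perm.mul_apply]
          constructor
          · intro h
            have h2 := congrArg (χ.1 : Equiv.Perm Y.carrier) h
            rwa [show (χ.1 : Equiv.Perm Y.carrier) (χ.1⁻¹ (φ z)) = φ z from Equiv.apply_symm_apply _ _] at h2
          · intro h
            rw [h]
            exact Equiv.symm_apply_apply _ _
        have hint : (interior {z : Y.carrier | g z = z}).Nonempty := by
          rw [hseteq]
          exact hχint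
        have hall := fix_of_interior Y hYirr (⇑g) hgc hgcm hint
        have hgone : g = 1 := Equiv.ext hall
        have hφχ : φ = χ.1 := by
          have := inv_mul_eq_one.mp hgone
          exact this.symm
        rw [hφχ]
        exact χ.2
      · intro hφH
        have hm := mem_relAut_iff.mp (hH hφH)
        exact mem_relAut_iff.mpr ⟨hm.1, hm.2.1, hm.2.2.1,
          fun y => ((horb y (φ y)).mpr ⟨φ, hφH, rfl⟩).symm⟩
    exact ⟨hunram, by rw [hAut], hAut⟩
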